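/- Code-offset secure sketch for the Hamming metric: let F be a finite abelian group (written additively) of size F, let f = log₂ F, and let C ⊆ F^n be a code with K codewords and minimum Hamming distance at least 2t+1. Define SS(w) = w − c for c chosen uniformly at random from C, and let Rec(w', s) output c' + s where c' is the unique codeword of C with Hamming distance at most t from w' − s (if one exists). Then (SS, Rec) is an average-case (F^n, m, m − (n·f − log₂ K), t)-secure sketch (for F^n with the Hamming metric) for every m; in particular, for an [n, k, 2t+1]_F code with K = F^k, the entropy loss is (n − k)·f. -/

import Mathlib

open Finset

/-- A probability distribution on a finite type. -/
def IsDist {α : Type*} [Fintype α] (p : α → ℝ) : Prop :=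
  (∀ a, 0 ≤ p a) ∧ ∑ a, p a = 1

/-- Average min-entropy `H̃∞(A | B)`. -/
noncomputable def avgMinEntropy {α β : Type*} [Fintype α] [Fintype β] (p : α × β → ℝ) : ℝ :=
  - Real.logb 2 (∑ b, ⨆ a, p (a, b))

/-- Code-offset secure sketch for the Hamming metric: if `C ⊆ 𝔽ⁿ` is a
code with `K` codewords and minimum Hamming distance at least `2t+1` over a finite abelian
group `𝔽`, then `SS(w) = w − c` for a uniformly random codeword `c` (with recovery by
decoding `w' − s` and shifting back) is an average-case
`(𝔽ⁿ, m, m − (n·log₂|𝔽| − log₂ K), t)`-secure sketch for every `m`. -/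
theorem code_offset_secure_sketch {𝔽 : Type} [Fintype 𝔽] [DecidableEq 𝔽] [AddCommGroup 𝔽]
    {n : ℕ} (C : Finset (Fin n → 𝔽)) (K t : ℕ) (hK : C.card = K) (hKpos : 0 < K)
    (hmin : ∀ c₁ ∈ C, ∀ c₂ ∈ C, c₁ ≠ c₂ → 2 * t + 1 ≤ hammingDist c₁ c₂)
    (m : ℝ) :
    ∃ Rec : (Fin n → 𝔽) → (Fin n → 𝔽) → (Fin n → 𝔽),
      -- correctness: for every choice `c ∈ C` of the random codeword
      (∀ (w w' : Fin n → 𝔽) (c : {c // c ∈ C}), hammingDist w w' ≤ t →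
        Rec w' (w - c.1) = w) ∧
      -- average-case security
      ∀ (ι : Type) [Fintype ι] (p : (Fin n → 𝔽) × ι → ℝ),
        IsDist p → m ≤ avgMinEntropy p →
        m - ((n : ℝ) * Real.logb 2 (Fintype.card 𝔽 : ℝ) - Real.logb 2 (K : ℝ))
          ≤ avgMinEntropy (fun x : (Fin n → 𝔽) × (Fin n → 𝔽) × ι =>
              p (x.1, x.2.2) *
                ((Finset.univ.filter fun c : {c // c ∈ C} => x.1 - c.1 = x.2.1).card : ℝ)
                / (K : ℝ)) := by
  classical
  have hαne : Nonempty (Fin n → 𝔽) := ⟨0⟩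
  refine ⟨fun w' s => if h : ∃ c ∈ C, hammingDist (w' - s) c ≤ t then h.choose + s else w',
    ?_, ?_⟩
  · -- correctness
    intro w w' c hd
    have hdc : hammingDist (w' - (w - c.1)) c.1 ≤ t := by
      have he : -(w' - (w - c.1)) + c.1 = -w' + w := by abel
      rw [hammingDist_eq_hammingNorm, he, ← hammingDist_eq_hammingNorm, hammingDist_comm]
      exact hd
    have h : ∃ c' ∈ C, hammingDist (w' - (w - c.1)) c' ≤ t := ⟨c.1, c.2, hdc⟩
    simp only [dif_pos h]
    have hspec := h.choose_spec
    have heq : h.choose = c.1 := by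
      by_contra hne
      have h1 := hmin h.choose hspec.1 c.1 c.2 hne
      have h2 : hammingDist h.choose c.1 ≤
          hammingDist h.choose (w' - (w - c.1)) + hammingDist (w' - (w - c.1)) c.1 :=
        hammingDist_triangle _ _ _
      have h3 := hammingDist_comm h.choose (w' - (w - c.1))
      have h4 := hspec.2
      omega
    rw [heq, add_comm, sub_add_cancel]
  · -- security
    intro ι _ p hp hm
    set q : (Fin n → 𝔽) × (Fin n → 𝔽) × ι → ℝ := fun x =>
      p (x.1, x.2.2) *
        ((Finset.univ.filter fun c : {c // c ∈ C} => x.1 - c.1 = x.2.1).card : ℝ) / (K : ℝ)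
      with hq_def
    have hKR : (0:ℝ) < (K:ℝ) := by exact_mod_cast hKpos
    have hq0 : ∀ x, 0 ≤ q x := fun x =>
      div_nonneg (mul_nonneg (hp.1 _) (Nat.cast_nonneg _)) (le_of_lt hKR)
    have hcard : ∀ (w s : Fin n → 𝔽),
        ((Finset.univ.filter fun c : {c // c ∈ C} => w - c.1 = s).card) ≤ 1 := by
      intro w s
      refine Finset.card_le_one.2 ?_
      intro a ha b hb
      simp only [Finset.mem_filter, Finset.mem_univ, true_and] at ha hb
      have : w - a.1 = w - b.1 := by rw [ha, hb]
      exact Subtype.ext (by have := sub_right_injective this; exact this)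
    -- positivity of the p-mass point
    have hex : ∃ x, 0 < p x := by
      by_contra hno
      push_neg at hno
      have : ∑ x, p x = 0 :=
        Finset.sum_eq_zero fun x _ => le_antisymm (hno x) (hp.1 x)
      rw [hp.2] at this; norm_num at this
    obtain ⟨⟨a₀, i₀⟩, hx0⟩ := hex
    have hCne : C.Nonempty := Finset.card_pos.1 (hK ▸ hKpos)
    obtain ⟨c₀, hc₀⟩ := hCne
    -- bddAbove helpers
    have hbddp : ∀ i : ι, BddAbove (Set.range fun a => p (a, i)) := fun i =>
      Set.Finite.bddAbove (Set.finite_range _)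
    have hbddq : ∀ b : (Fin n → 𝔽) × ι, BddAbove (Set.range fun a => q (a, b)) := fun b =>
      Set.Finite.bddAbove (Set.finite_range _)
    set Y : ℝ := ∑ i : ι, ⨆ a, p (a, i) with hY_def
    set X : ℝ := ∑ b : (Fin n → 𝔽) × ι, ⨆ a, q (a, b) with hX_def
    have hsupp0 : ∀ i : ι, 0 ≤ ⨆ a, p (a, i) := fun i =>
      le_trans (hp.1 (Classical.arbitrary _, i)) (le_ciSup (hbddp i) _)
    have hsupq0 : ∀ b, 0 ≤ ⨆ a, q (a, b) := fun b =>
      le_trans (hq0 (Classical.arbitrary _, b)) (le_ciSup (hbddq b) _)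
    have hYpos : 0 < Y := by
      refine Finset.sum_pos' (fun i _ => hsupp0 i) ⟨i₀, Finset.mem_univ _, ?_⟩
      exact lt_of_lt_of_le hx0 (le_ciSup (hbddp i₀) a₀)
    have hXpos : 0 < X := by
      refine Finset.sum_pos' (fun b _ => hsupq0 b) ⟨(a₀ - c₀, i₀), Finset.mem_univ _, ?_⟩
      refine lt_of_lt_of_le ?_ (le_ciSup (hbddq _) a₀)
      have hmem : (⟨c₀, hc₀⟩ : {c // c ∈ C}) ∈
          (Finset.univ.filter fun c : {c // c ∈ C} => a₀ - c.1 = a₀ - c₀) := by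
        simp
      have hcpos : 0 < ((Finset.univ.filter
          fun c : {c // c ∈ C} => a₀ - c.1 = a₀ - c₀).card : ℝ) := by
        have := Finset.card_pos.2 ⟨_, hmem⟩
        exact_mod_cast this
      exact div_pos (mul_pos hx0 hcpos) hKR
    -- X ≤ (card 𝔽^n / K) * Y
    have hXle : X ≤ (Fintype.card (Fin n → 𝔽) : ℝ) * Y / K := by
      have step : ∀ b : (Fin n → 𝔽) × ι, (⨆ a, q (a, b)) ≤ (⨆ a, p (a, b.2)) / K := by
        intro b
        refine ciSup_le fun a => ?_
        have h1 : p (a, b.2) * ((Finset.univ.filter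
            fun c : {c // c ∈ C} => a - c.1 = b.1).card : ℝ) ≤ (⨆ a, p (a, b.2)) * 1 := by
          refine mul_le_mul (le_ciSup (hbddp b.2) a) ?_ (Nat.cast_nonneg _) (hsupp0 b.2)
          exact_mod_cast hcard a b.1
        calc q (a, b) = p (a, b.2) * ((Finset.univ.filter
              fun c : {c // c ∈ C} => a - c.1 = b.1).card : ℝ) / K := rfl
          _ ≤ (⨆ a, p (a, b.2)) * 1 / K := by
              exact div_le_div_of_nonneg_right h1 hKR.le |>.trans_eq rfl
          _ = (⨆ a, p (a, b.2)) / K := by ring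
      calc X ≤ ∑ b : (Fin n → 𝔽) × ι, (⨆ a, p (a, b.2)) / K :=
            Finset.sum_le_sum fun b _ => step b
        _ = (Fintype.card (Fin n → 𝔽) : ℝ) * Y / K := by
            rw [Fintype.sum_prod_type]
            simp [Finset.sum_const, hY_def, Finset.sum_div, Finset.mul_sum, mul_div_assoc]
    have hYle : Y ≤ (2:ℝ) ^ (-m) := by
      have hlog : Real.logb 2 Y ≤ -m := by
        have := hm
        unfold avgMinEntropy at this
        linarith
      exact (Real.logb_le_iff_le_rpow one_lt_two hYpos).1 hlog
    have hZpos : (0:ℝ) < (Fintype.card (Fin n → 𝔽) : ℝ) * (2:ℝ) ^ (-m) / K := by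
      have : (0:ℝ) < (Fintype.card (Fin n → 𝔽) : ℝ) := by
        exact_mod_cast Fintype.card_pos
      positivity
    have hXle2 : X ≤ (Fintype.card (Fin n → 𝔽) : ℝ) * (2:ℝ) ^ (-m) / K := by
      refine hXle.trans ?_
      have hc : (0:ℝ) ≤ (Fintype.card (Fin n → 𝔽) : ℝ) := Nat.cast_nonneg _
      gcongr
    have hlogX : Real.logb 2 X ≤
        (n : ℝ) * Real.logb 2 (Fintype.card 𝔽 : ℝ) - Real.logb 2 (K : ℝ) - m := by
      have h1 : Real.logb 2 X ≤
          Real.logb 2 ((Fintype.card (Fin n → 𝔽) : ℝ) * (2:ℝ) ^ (-m) / K) :=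
        (Real.logb_le_logb one_lt_two hXpos hZpos).2 hXle2
      have hcardα : (Fintype.card (Fin n → 𝔽) : ℝ) = ((Fintype.card 𝔽 : ℝ)) ^ n := by
        rw [Fintype.card_fun]
        push_cast
        simp
      have hcne : (Fintype.card (Fin n → 𝔽) : ℝ) ≠ 0 := by
        have : (0:ℝ) < (Fintype.card (Fin n → 𝔽) : ℝ) := by exact_mod_cast Fintype.card_pos
        linarith
      have hpne : ((2:ℝ) ^ (-m)) ≠ 0 := ne_of_gt (Real.rpow_pos_of_pos two_pos _)
      have h2 : Real.logb 2 ((Fintype.card (Fin n → 𝔽) : ℝ) * (2:ℝ) ^ (-m) / K)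
          = (n : ℝ) * Real.logb 2 (Fintype.card 𝔽 : ℝ) - Real.logb 2 (K : ℝ) - m := by
        rw [Real.logb_div (mul_ne_zero hcne hpne) (ne_of_gt hKR),
          Real.logb_mul hcne hpne, Real.logb_rpow two_pos (by norm_num), hcardα,
          Real.logb_pow]
        ring
      linarith [h1, h2.le, h2.ge]
    unfold avgMinEntropy
    linarith
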